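/- Let r(x) = a_0 + a_1 x + ... + a_k x^k be a real polynomial of degree k ≥ 3 with all coefficients a_j > 0 and all roots real. Setting γ_j = a_{j−1}/a_j, one has γ_k − 4·γ_{k−1} + 3·γ_{k−2} ≥ 0. -/

import Mathlib

open Polynomial

/-- A real polynomial is hyperbolic if all of its complex roots are real. -/
def Hyperbolic (P : Polynomial ℝ) : Prop :=
  ∀ z : ℂ, Polynomial.aeval z P = 0 → z.im = 0


lemma my_esymm_cons (a : ℝ) (s : Multiset ℝ) (n : ℕ) :
    (a ::ₘ s).esymm (n + 1) = s.esymm (n + 1) + a * s.esymm n := by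
  rw [Multiset.esymm, Multiset.powersetCard_cons, Multiset.map_add, Multiset.sum_add,
    Multiset.map_map]
  congr 1
  rw [Multiset.esymm, ← Multiset.sum_map_mul_left]
  congr 1
  apply Multiset.map_congr rfl
  intro t _
  simp [Multiset.prod_cons]

lemma my_esymm_one (s : Multiset ℝ) : s.esymm 1 = s.sum := by
  rw [Multiset.esymm, Multiset.powersetCard_one, Multiset.map_map]
  simp

lemma my_esymm_zero (s : Multiset ℝ) : s.esymm 0 = 1 := by
  simp [Multiset.esymm, Multiset.powersetCard_zero_left]

lemma my_esymm_nil (n : ℕ) : (0 : Multiset ℝ).esymm (n + 1) = 0 := by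
  simp [Multiset.esymm, Multiset.powersetCard_zero_right]

lemma my_newton2 (s : Multiset ℝ) :
    (s.map (fun x => x ^ 2)).sum = s.sum ^ 2 - 2 * s.esymm 2 := by
  induction s using Multiset.induction with
  | empty =>
    rw [show (2 : ℕ) = 1 + 1 from rfl, my_esymm_nil]; simp
  | cons a s ih =>
    rw [Multiset.map_cons, Multiset.sum_cons, Multiset.sum_cons, ih,
      show (2 : ℕ) = 1 + 1 from rfl, my_esymm_cons, my_esymm_one]
    ring

lemma my_newton3 (s : Multiset ℝ) :
    (s.map (fun x => x ^ 3)).sum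
      = s.sum ^ 3 - 3 * s.sum * s.esymm 2 + 3 * s.esymm 3 := by
  induction s using Multiset.induction with
  | empty =>
    rw [show (3 : ℕ) = 2 + 1 from rfl, my_esymm_nil,
      my_esymm_nil]; simp
  | cons a s ih =>
    have e3 : (a ::ₘ s).esymm 3 = s.esymm 3 + a * s.esymm 2 := my_esymm_cons a s 2
    have e2 : (a ::ₘ s).esymm 2 = s.esymm 2 + a * s.esymm 1 := my_esymm_cons a s 1
    rw [Multiset.map_cons, Multiset.sum_cons, Multiset.sum_cons, ih,
      e3, e2, my_esymm_one]
    ring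

lemma my_aux (a : ℝ) (ha : 0 ≤ a) (s : Multiset ℝ) (hs : ∀ b ∈ s, 0 ≤ b) :
    2 * a ^ 2 * (s.map (fun x => x ^ 2)).sum
      ≤ a * (s.map (fun x => x ^ 3)).sum + a ^ 3 * s.sum := by
  induction s using Multiset.induction with
  | empty => simp
  | cons b s ih =>
    have hb : 0 ≤ b := hs b (Multiset.mem_cons_self _ _)
    have ih' := ih (fun c hc => hs c (Multiset.mem_cons_of_mem hc))
    simp only [Multiset.map_cons, Multiset.sum_cons]
    nlinarith [mul_nonneg (mul_nonneg ha hb) (sq_nonneg (a - b))]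

lemma my_cauchy (s : Multiset ℝ) (hs : ∀ b ∈ s, 0 ≤ b) :
    ((s.map (fun x => x ^ 2)).sum) ^ 2
      ≤ s.sum * (s.map (fun x => x ^ 3)).sum := by
  induction s using Multiset.induction with
  | empty => simp
  | cons a s ih =>
    have ha : 0 ≤ a := hs a (Multiset.mem_cons_self _ _)
    have hs' : ∀ b ∈ s, 0 ≤ b := fun c hc => hs c (Multiset.mem_cons_of_mem hc)
    have ih' := ih hs'
    have aux := my_aux a ha s hs'
    simp only [Multiset.map_cons, Multiset.sum_cons]
    nlinarith

lemma my_key (s : Multiset ℝ) (hs : ∀ b ∈ s, 0 ≤ b) :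
    4 * s.esymm 2 ^ 2 ≤ s.esymm 1 ^ 2 * s.esymm 2 + 3 * s.esymm 1 * s.esymm 3 := by
  have h2 := my_newton2 s
  have h3 := my_newton3 s
  have hc := my_cauchy s hs
  rw [h2, h3] at hc
  rw [my_esymm_one]
  nlinarith [hc]


lemma hyp_splits : ∀ (n : ℕ) (P : Polynomial ℝ), P.natDegree = n → P ≠ 0 →
    Hyperbolic P → P.Splits := by
  intro n
  induction n using Nat.strong_induction_on with
  | _ n ih =>
    intro P hn hP hhyp
    rcases Nat.eq_zero_or_pos n with h0 | h0
    · exact Splits.of_natDegree_le_one (by omega)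
    have hdegpos : 0 < P.degree := by
      rw [Polynomial.natDegree_pos_iff_degree_pos.symm]
      omega
    have hmapdeg : 0 < (P.map (algebraMap ℝ ℂ)).degree := by
      rwa [Polynomial.degree_map]
    obtain ⟨z, hz⟩ := Complex.exists_root hmapdeg
    have haev : Polynomial.aeval z P = 0 := by
      rwa [Polynomial.aeval_def, ← Polynomial.eval_map]
    have him : z.im = 0 := hhyp z haev
    have hzre : z = (z.re : ℂ) := by
      apply Complex.ext <;> simp [him]
    have hroot : P.IsRoot z.re := by
      have : (algebraMap ℝ ℂ) (P.eval z.re) = 0 := by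
        rw [← Polynomial.eval₂_at_apply, ← Polynomial.aeval_def, Complex.coe_algebraMap, ← hzre, haev]
      simpa using this
    obtain ⟨Q, hQ⟩ := Polynomial.dvd_iff_isRoot.2 hroot
    have hQ0 : Q ≠ 0 := by
      rintro rfl; rw [mul_zero] at hQ; exact hP hQ
    have hX0 : (X - C z.re : Polynomial ℝ) ≠ 0 := Polynomial.X_sub_C_ne_zero z.re
    have hdQ : Q.natDegree = n - 1 := by
      have := Polynomial.natDegree_mul hX0 hQ0
      rw [← hQ, hn, Polynomial.natDegree_X_sub_C] at this
      omega
    have hQhyp : Hyperbolic Q := by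
      intro w hw
      apply hhyp w
      rw [hQ, map_mul, hw, mul_zero]
    have hQsplits := ih (n - 1) (by omega) Q hdQ hQ0 hQhyp
    rw [hQ]
    exact (Polynomial.Splits.X_sub_C _).mul hQsplits

/-- For a real-rooted polynomial `r(x) = a_0 + ... + a_k x^k` of degree `k ≥ 3` with positive
coefficients, setting `γ_j = a_{j-1}/a_j`, one has `γ_k - 4 γ_{k-1} + 3 γ_{k-2} ≥ 0`. -/
theorem stmt1 (k : ℕ) (hk : 3 ≤ k) (P : Polynomial ℝ) (hdeg : P.natDegree = k)
    (hpos : ∀ j ≤ k, 0 < P.coeff j) (hhyp : Hyperbolic P) :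
    P.coeff (k - 1) / P.coeff k
      - 4 * (P.coeff (k - 2) / P.coeff (k - 1))
      + 3 * (P.coeff (k - 3) / P.coeff (k - 2)) ≥ 0 := by
  have hA : 0 < P.coeff k := hpos k le_rfl
  have hP0 : P ≠ 0 := by
    intro h
    rw [h] at hA
    simp at hA
  have hsplits := hyp_splits k P hdeg hP0 hhyp
  have hcard : Multiset.card P.roots = P.natDegree :=
    (Polynomial.splits_iff_card_roots).1 hsplits
  set s := P.roots with hs
  -- all roots are negative
  have hneg : ∀ r ∈ s, r < 0 := by
    intro r hr
    have hroot : P.eval r = 0 := (Polynomial.mem_roots hP0).1 hr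
    by_contra hcon
    push_neg at hcon
    have hpe : 0 < P.eval r := by
      rw [Polynomial.eval_eq_sum_range]
      apply Finset.sum_pos'
      · intro i hi
        rw [Finset.mem_range, hdeg] at hi
        exact mul_nonneg (hpos i (by omega)).le (pow_nonneg hcon i)
      · refine ⟨0, by simp [hdeg], ?_⟩
        simpa using hpos 0 (by omega)
    linarith
  set b := s.map Neg.neg with hb
  have hbnn : ∀ x ∈ b, 0 ≤ x := by
    intro x hx
    rw [hb, Multiset.mem_map] at hx
    obtain ⟨r, hr, rfl⟩ := hx
    linarith [hneg r hr]
  have hcoeff : ∀ j ≤ k, P.coeff (k - j) = P.coeff k * b.esymm j := by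
    intro j hj
    have h1 : k - j ≤ P.natDegree := by omega
    have h2 := Polynomial.coeff_eq_esymm_roots_of_card hcard h1
    have h3 : P.natDegree - (k - j) = j := by omega
    rw [h3] at h2
    rw [hb, Multiset.esymm_neg, h2, Polynomial.leadingCoeff, hdeg]
    ring
  have hc1 := hcoeff 1 (by omega)
  have hc2 := hcoeff 2 (by omega)
  have hc3 := hcoeff 3 (by omega)
  set e1 := b.esymm 1
  set e2 := b.esymm 2
  set e3 := b.esymm 3
  have he1 : 0 < e1 := by
    have := hpos (k - 1) (by omega)
    rw [hc1] at this
    rcases mul_pos_iff.1 this with h | h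
    · exact h.2
    · linarith [h.1]
  have he2 : 0 < e2 := by
    have := hpos (k - 2) (by omega)
    rw [hc2] at this
    rcases mul_pos_iff.1 this with h | h
    · exact h.2
    · linarith [h.1]
  have key := my_key b hbnn
  rw [hc1, hc2, hc3]
  have hq1 : P.coeff k * e1 / P.coeff k = e1 := by
    field_simp
  have hq2 : P.coeff k * e2 / (P.coeff k * e1) = e2 / e1 :=
    mul_div_mul_left _ _ hA.ne'
  have hq3 : P.coeff k * e3 / (P.coeff k * e2) = e3 / e2 :=
    mul_div_mul_left _ _ hA.ne'
  rw [hq1, hq2, hq3]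
  have hrw : e1 - 4 * (e2 / e1) + 3 * (e3 / e2)
      = (e1 ^ 2 * e2 + 3 * e1 * e3 - 4 * e2 ^ 2) / (e1 * e2) := by
    field_simp
    ring
  rw [ge_iff_le, hrw]
  apply div_nonneg
  · linarith
  · positivity
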